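/- For each nonnegative integer m and nonnegative integer n, there is a bijection between the set of self-conjugate partitions of 4n + m(m+1)/2 whose main diagonal hook lengths satisfy |D_1| − |D_3| = (−1)^{m+1}⌈m/2⌉, and the set of all partitions of n. -/

import Mathlib

/-- A partition, encoded as an antitone, eventually-zero function (0-indexed parts). -/
def IsPartition (l : ℕ → ℕ) : Prop := Antitone l ∧ ∃ N, l N = 0

/-- The conjugate partition: `conj l j` is the number of rows whose length exceeds `j`. -/
noncomputable def conj (l : ℕ → ℕ) (j : ℕ) : ℕ := Set.ncard {i | j < l i}

/-- Hook length of the box in row `i`, column `j` (0-indexed): arm + leg + 1. -/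
noncomputable def hookLen (l : ℕ → ℕ) (i j : ℕ) : ℕ :=
  (l i - (j + 1)) + (conj l j - (i + 1)) + 1

/-- A self-conjugate partition equals its conjugate. -/
def SelfConj (l : ℕ → ℕ) : Prop := conj l = l

/-- Side length of the Durfee square: the number of boxes on the main diagonal. -/
noncomputable def durfee (l : ℕ → ℕ) : ℕ := Set.ncard {i | i < l i}

/-- The number of boxes of the Young diagram. -/
noncomputable def psize (l : ℕ → ℕ) : ℕ := Set.ncard {p : ℕ × ℕ | p.2 < l p.1}

/-- The disparity: (#boxes with odd hook length) - (#boxes with even hook length). -/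
noncomputable def dp (l : ℕ → ℕ) : ℤ :=
  (Set.ncard {p : ℕ × ℕ | p.2 < l p.1 ∧ Odd (hookLen l p.1 p.2)} : ℤ) -
  (Set.ncard {p : ℕ × ℕ | p.2 < l p.1 ∧ Even (hookLen l p.1 p.2)} : ℤ)

/-- The set of main diagonal hook lengths. -/
def Dset (l : ℕ → ℕ) : Set ℕ := {x | ∃ i, i < l i ∧ x = hookLen l i i}

/-- Main diagonal hook lengths congruent to 1 mod 4. -/
def D1 (l : ℕ → ℕ) : Set ℕ := {x ∈ Dset l | x % 4 = 1}

/-- Main diagonal hook lengths congruent to 3 mod 4. -/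
def D3 (l : ℕ → ℕ) : Set ℕ := {x ∈ Dset l | x % 4 = 3}

/-- A `t`-core partition: no hook length is divisible by `t`. -/
def IsCore (l : ℕ → ℕ) (t : ℕ) : Prop := ∀ i j, j < l i → ¬ (t ∣ hookLen l i j)

open Finset



lemma ncard_Iio (x : ℕ) : (Set.Iio x).ncard = x := by
  rw [← Finset.coe_Iio, Set.ncard_coe_finset, Nat.card_Iio]

lemma ncard_Iic (x : ℕ) : (Set.Iic x).ncard = x + 1 := by
  rw [← Finset.coe_Iic, Set.ncard_coe_finset, Nat.card_Iic]

-- initial segment lemma for sets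
lemma finseg {S : Set ℕ} (hfin : S.Finite) (hdc : ∀ ⦃x y : ℕ⦄, x ≤ y → y ∈ S → x ∈ S) :
    ∀ x, x ∈ S ↔ x < S.ncard := by
  intro x
  constructor
  · intro hx
    have h1 : Set.Iic x ⊆ S := fun y hy => hdc hy hx
    have := Set.ncard_le_ncard h1 hfin
    rw [ncard_Iic] at this; omega
  · intro hx
    by_contra hxS
    have h1 : S ⊆ Set.Iio x := by
      intro y hy
      rcases Nat.lt_or_ge y x with h | h
      · exact h
      · exact absurd (hdc h hy) hxS
    have := Set.ncard_le_ncard h1 (Set.finite_Iio x)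
    rw [ncard_Iio] at this; omega

lemma finseg_eq {S : Set ℕ} (hfin : S.Finite) (hdc : ∀ ⦃x y : ℕ⦄, x ≤ y → y ∈ S → x ∈ S) :
    S = Set.Iio S.ncard := Set.ext fun x => (finseg hfin hdc x)

-- initial segment lemma for filters of range
lemma finsegF {p : ℕ → Prop} [DecidablePred p] {d : ℕ}
    (hdc : ∀ x y, x ≤ y → y < d → p y → p x) :
    ∀ x, x ∈ (Finset.range d).filter p ↔ x < ((Finset.range d).filter p).card := by
  intro x
  constructor
  · intro hx
    simp only [mem_filter, mem_range] at hx
    have h1 : Finset.range (x+1) ⊆ (Finset.range d).filter p := by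
      intro y hy
      simp only [mem_range] at hy
      simp only [mem_filter, mem_range]
      exact ⟨by omega, hdc y x (by omega) hx.1 hx.2⟩
    have := Finset.card_le_card h1
    simp at this; omega
  · intro hx
    by_contra hxS
    have h1 : (Finset.range d).filter p ⊆ Finset.range x := by
      intro y hy
      simp only [mem_range]
      by_contra hyx
      simp only [mem_filter, mem_range] at hy
      exact hxS (by simp only [mem_filter, mem_range]
                    exact ⟨by omega, hdc x y (by omega) hy.1 hy.2⟩)
    have := Finset.card_le_card h1
    simp at this; omega

section basics
variable {l : ℕ → ℕ}

lemma row_fin (hA : Antitone l) {M : ℕ} (hM : l M = 0) {j : ℕ} :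
    {i | j < l i} ⊆ Set.Iio M := by
  intro i hi
  simp only [Set.mem_setOf_eq] at hi
  simp only [Set.mem_Iio]
  by_contra h
  have := hA (show M ≤ i by omega)
  omega

lemma conj_char (hA : Antitone l) {M : ℕ} (hM : l M = 0) (i j : ℕ) :
    i < conj l j ↔ j < l i := by
  have hfin : {i | j < l i}.Finite := (Set.finite_Iio M).subset (row_fin hA hM)
  have hdc : ∀ ⦃x y : ℕ⦄, x ≤ y → y ∈ {i | j < l i} → x ∈ {i | j < l i} := by
    intro x y hxy hy
    simp only [Set.mem_setOf_eq] at hy ⊢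
    have := hA hxy; omega
  exact ((finseg hfin hdc i).symm)

lemma conj_anti (hA : Antitone l) {M : ℕ} (hM : l M = 0) : Antitone (conj l) := by
  intro j j' hj
  by_contra h
  push_neg at h
  have h2 : conj l j < conj l j' := h
  have h3 := (conj_char hA hM (conj l j) j').mp h2
  have h4 : ¬ (j < l (conj l j)) := by
    rw [← conj_char hA hM]; omega
  omega

lemma durfee_char (hA : Antitone l) {M : ℕ} (hM : l M = 0) (i : ℕ) :
    i < durfee l ↔ i < l i := by
  have hfin : {i | i < l i}.Finite := (Set.finite_Iio M).subset (by
    intro i hi; simp only [Set.mem_setOf_eq] at hi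
    simp only [Set.mem_Iio]; by_contra h
    have := hA (show M ≤ i by omega); omega)
  have hdc : ∀ ⦃x y : ℕ⦄, x ≤ y → y ∈ {i | i < l i} → x ∈ {i | i < l i} := by
    intro x y hxy hy
    simp only [Set.mem_setOf_eq] at hy ⊢
    have := hA hxy; omega
  exact (finseg hfin hdc i).symm

lemma psize_eq_sum (hA : Antitone l) {M : ℕ} (hM : l M = 0) :
    psize l = ∑ i ∈ Finset.range M, l i := by
  have hset : {p : ℕ × ℕ | p.2 < l p.1} =
      ↑((Finset.range M).biUnion (fun i => {i} ×ˢ Finset.range (l i))) := by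
    ext ⟨i, j⟩
    simp only [Set.mem_setOf_eq, coe_biUnion, Set.mem_iUnion, Finset.coe_range,
      Set.mem_Iio, Finset.coe_product, Set.mem_prod, Finset.coe_singleton,
      Set.mem_singleton_iff]
    constructor
    · intro h
      refine ⟨i, ?_, rfl, h⟩
      by_contra hi
      have := hA (show M ≤ i by omega); omega
    · rintro ⟨i', _, rfl, h⟩; exact h
  rw [psize, hset, Set.ncard_coe_finset]
  rw [Finset.card_biUnion]
  · refine Finset.sum_congr rfl fun i _ => by simp
  · intro x _ y _ hxy
    simp only [Finset.disjoint_left]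
    rintro ⟨p, q⟩ hp hq
    simp only [Finset.mem_product, Finset.mem_singleton] at hp hq
    exact hxy (hp.1 ▸ hq.1 ▸ rfl)

end basics

lemma swap_count {I J : Finset ℕ} {p : ℕ → ℕ → Prop} [∀ i j, Decidable (p i j)] :
    ∑ i ∈ I, (J.filter (fun j => p i j)).card = ∑ j ∈ J, (I.filter (fun i => p i j)).card := by
  simp only [Finset.card_filter]
  exact Finset.sum_comm

lemma sum_conj {a R : ℕ} {ν : ℕ → ℕ} (hR : ∀ j < a, ν j ≤ R) :
    ∑ r ∈ Finset.range R, ((Finset.range a).filter (fun j => r < ν j)).card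
      = ∑ j ∈ Finset.range a, ν j := by
  rw [swap_count]
  refine Finset.sum_congr rfl fun j hj => ?_
  simp only [Finset.mem_range] at hj
  have : (Finset.range R).filter (fun r => r < ν j) = Finset.range (ν j) := by
    ext r
    simp only [Finset.mem_filter, Finset.mem_range]
    have := hR j hj; omega
  rw [this, Finset.card_range]

/-! ### Decreasing enumeration of a finset -/

noncomputable def denum (S : Finset ℕ) : ℕ → ℕ :=
  fun i => if h : i < S.card then S.orderEmbOfFin rfl ⟨S.card - 1 - i, by omega⟩ else 0

lemma denum_mem {S : Finset ℕ} {i : ℕ} (hi : i < S.card) : denum S i ∈ S := by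
  rw [denum, dif_pos hi]
  exact Finset.orderEmbOfFin_mem _ _ _

lemma denum_strictAnti {S : Finset ℕ} {i j : ℕ} (hij : i < j) (hj : j < S.card) :
    denum S j < denum S i := by
  rw [denum, denum, dif_pos hj, dif_pos (hij.trans hj)]
  exact (S.orderEmbOfFin rfl).strictMono (by simp only [Fin.mk_lt_mk]; omega)

lemma denum_image (S : Finset ℕ) : (Finset.range S.card).image (denum S) = S := by
  apply Finset.eq_of_subset_of_card_le
  · intro x hx
    simp only [Finset.mem_image, Finset.mem_range] at hx
    obtain ⟨i, hi, rfl⟩ := hx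
    exact denum_mem hi
  · rw [Finset.card_image_of_injOn, Finset.card_range]
    intro x hx y hy hxy
    simp only [Finset.coe_range, Set.mem_Iio] at hx hy
    rcases Nat.lt_trichotomy x y with h | h | h
    · exact absurd hxy (denum_strictAnti h hy).ne'
    · exact h
    · exact absurd hxy (denum_strictAnti h hx).ne

lemma denum_unique {S : Finset ℕ} {d : ℕ} (hd : S.card = d) {f : ℕ → ℕ}
    (hmem : ∀ i < d, f i ∈ S)
    (hanti : ∀ ⦃i j⦄, i < j → j < d → f j < f i) {i : ℕ} (hi : i < d) :
    denum S i = f i := by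
  subst hd
  have key : (fun k : Fin S.card => f (S.card - 1 - (k : ℕ))) = S.orderEmbOfFin rfl := by
    apply Finset.orderEmbOfFin_unique
    · intro x; exact hmem _ (by omega)
    · intro x y hxy
      exact hanti (by omega : S.card - 1 - (y:ℕ) < S.card - 1 - (x:ℕ)) (by omega)
  rw [denum, dif_pos hi, ← key]
  simp only []
  congr 1
  omega

lemma denum_gap {S : Finset ℕ} {i j : ℕ} (hij : i ≤ j) (hj : j < S.card) :
    denum S j + (j - i) ≤ denum S i := by
  induction j, hij using Nat.le_induction with
  | base => simp
  | succ j hij ih =>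
    have h1 := denum_strictAnti (show j < j + 1 by omega) hj
    have h2 := ih (by omega)
    omega

/-! ### The self-conjugate partition built from a finset of diagonal arms -/

noncomputable def scOf (S : Finset ℕ) : ℕ → ℕ :=
  fun i => if i < S.card then denum S i + i + 1
    else ((Finset.range S.card).filter (fun j => i ≤ denum S j + j)).card

section scOf
variable {S : Finset ℕ}

lemma t_anti {j j' : ℕ} (h : j ≤ j') (hj' : j' < S.card) :
    denum S j' + j' ≤ denum S j + j := by
  have := denum_gap h hj'; omega

lemma s_lb {j : ℕ} (hj : j < S.card) : S.card - 1 - j ≤ denum S j := by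
  have := denum_gap (show j ≤ S.card - 1 by omega) (show S.card - 1 < S.card by omega)
  omega

lemma scOf_tail_card_le (i : ℕ) :
    ((Finset.range S.card).filter (fun j => i ≤ denum S j + j)).card ≤ S.card := by
  exact le_trans (Finset.card_filter_le _ _) (by simp)

lemma scOf_tail_mem (i x : ℕ) :
    x ∈ (Finset.range S.card).filter (fun j => i ≤ denum S j + j) ↔
      x < ((Finset.range S.card).filter (fun j => i ≤ denum S j + j)).card := by
  apply finsegF
  intro x y hxy hy hpy
  exact le_trans hpy (t_anti hxy hy)

lemma scOf_aux1 {i j : ℕ} (hij : i ≤ j) :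
    j < scOf S i ↔ (i < S.card ∧ j ≤ denum S i + i) := by
  rw [scOf]
  by_cases hi : i < S.card
  · simp only [if_pos hi]; constructor
    · intro h; exact ⟨hi, by omega⟩
    · intro h; omega
  · simp only [if_neg hi]
    have := scOf_tail_card_le (S := S) i
    constructor
    · intro h; omega
    · intro h; exact absurd h.1 hi

lemma scOf_aux2 {i j : ℕ} (hij : i ≤ j) :
    i < scOf S j ↔ (i < S.card ∧ j ≤ denum S i + i) := by
  rw [scOf]
  by_cases hj : j < S.card
  · simp only [if_pos hj]
    have hi : i < S.card := by omega
    have h1 := denum_gap hij hj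
    constructor
    · intro _; exact ⟨hi, by omega⟩
    · intro _; omega
  · simp only [if_neg hj]
    rw [← scOf_tail_mem]
    simp only [Finset.mem_filter, Finset.mem_range]

lemma scOf_sym (i j : ℕ) : j < scOf S i ↔ i < scOf S j := by
  rcases le_or_gt i j with h | h
  · rw [scOf_aux1 h, scOf_aux2 h]
  · rw [scOf_aux1 (le_of_lt h), scOf_aux2 (le_of_lt h)]

lemma scOf_diag (i : ℕ) : i < scOf S i ↔ i < S.card := by
  rcases Nat.lt_or_ge i S.card with h | h
  · rw [scOf, if_pos h]; omega
  · rw [scOf, if_neg (by omega)]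
    have := scOf_tail_card_le (S := S) i
    omega

lemma scOf_anti : Antitone (scOf S) := by
  intro i i' hii'
  rcases Nat.lt_or_ge i' S.card with h | h
  · rw [scOf, scOf, if_pos h, if_pos (by omega)]
    have := t_anti hii' h
    omega
  · rcases Nat.lt_or_ge i S.card with h2 | h2
    · rw [scOf, scOf, if_pos h2, if_neg (by omega)]
      have h3 := scOf_tail_card_le (S := S) i'
      have h4 := s_lb h2
      omega
    · rw [scOf, scOf, if_neg (by omega), if_neg (by omega)]
      apply Finset.card_le_card
      intro x hx
      simp only [Finset.mem_filter, Finset.mem_range] at hx ⊢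
      exact ⟨hx.1, by omega⟩

lemma scOf_M_zero : scOf S (S.card + ∑ x ∈ S, x) = 0 := by
  rw [scOf, if_neg (by omega)]
  convert Finset.card_empty
  rw [Finset.filter_eq_empty_iff]
  intro j hj
  simp only [Finset.mem_range] at hj
  have h1 : denum S j ≤ ∑ x ∈ S, x := Finset.single_le_sum (fun x _ => Nat.zero_le x) (denum_mem hj)
  omega

lemma scOf_isPartition : IsPartition (scOf S) :=
  ⟨scOf_anti, ⟨_, scOf_M_zero⟩⟩

lemma scOf_selfConj : SelfConj (scOf S) := by
  funext j
  rw [conj]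
  have : {i | j < scOf S i} = Set.Iio (scOf S j) := by
    ext i; simp only [Set.mem_setOf_eq, Set.mem_Iio]; exact scOf_sym i j
  rw [this, ncard_Iio]

lemma scOf_durfee : durfee (scOf S) = S.card := by
  rw [durfee]
  have : {i | i < scOf S i} = Set.Iio S.card := by
    ext i; simp only [Set.mem_setOf_eq, Set.mem_Iio]; exact scOf_diag i
  rw [this, ncard_Iio]

lemma scOf_hook {i : ℕ} (hi : i < S.card) :
    hookLen (scOf S) i i = 2 * denum S i + 1 := by
  rw [hookLen, scOf_selfConj]
  rw [scOf, if_pos hi]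
  omega

lemma sum_denum : ∑ i ∈ Finset.range S.card, denum S i = ∑ x ∈ S, x := by
  conv_rhs => rw [← denum_image S]
  rw [Finset.sum_image]
  intro x hx y hy hxy
  simp only [Finset.coe_range, Set.mem_Iio, Finset.mem_coe, Finset.mem_range] at hx hy
  rcases Nat.lt_trichotomy x y with h | h | h
  · exact absurd hxy (denum_strictAnti h hy).ne'
  · exact h
  · exact absurd hxy (denum_strictAnti h hx).ne

lemma denum_injOn_lt {x y : ℕ} (hx : x < S.card) (hy : y < S.card)
    (hxy : denum S x = denum S y) : x = y := by
  rcases Nat.lt_trichotomy x y with h | h | h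
  · exact absurd hxy (denum_strictAnti h hy).ne'
  · exact h
  · exact absurd hxy (denum_strictAnti h hx).ne

lemma scOf_psize : psize (scOf S) = 2 * (∑ x ∈ S, x) + S.card := by
  set d := S.card with hd
  set M := d + ∑ x ∈ S, x with hM
  rw [psize_eq_sum scOf_anti (scOf_M_zero (S := S))]
  rw [Finset.range_eq_Ico, ← Finset.sum_Ico_consecutive _ (show 0 ≤ d by omega) (show d ≤ M by omega)]
  have h1 : ∑ i ∈ Finset.Ico 0 d, scOf S i = ∑ i ∈ Finset.range d, (denum S i + i + 1) := by
    rw [← Finset.range_eq_Ico]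
    refine Finset.sum_congr rfl fun i hi => ?_
    simp only [Finset.mem_range] at hi
    rw [scOf, if_pos hi]
  have h1' : ∑ i ∈ Finset.range d, (denum S i + i + 1)
      = (∑ i ∈ Finset.range d, denum S i) + ((∑ i ∈ Finset.range d, i) + d) := by
    rw [Finset.sum_add_distrib, Finset.sum_add_distrib, Finset.sum_const, Finset.card_range,
      smul_eq_mul, mul_one, add_assoc]
  have h2 : ∑ i ∈ Finset.Ico d M, scOf S i
      = ∑ j ∈ Finset.range d, ((Finset.Ico d M).filter (fun i => i ≤ denum S j + j)).card := by
    rw [← swap_count]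
    refine Finset.sum_congr rfl fun i hi => ?_
    simp only [Finset.mem_Ico] at hi
    rw [scOf, if_neg (by omega)]
  have h4 : ∑ j ∈ Finset.range d, ((Finset.Ico d M).filter (fun i => i ≤ denum S j + j)).card
      + ∑ j ∈ Finset.range d, (d - (j + 1))
      = ∑ j ∈ Finset.range d, denum S j := by
    rw [← Finset.sum_add_distrib]
    refine Finset.sum_congr rfl fun j hj => ?_
    simp only [Finset.mem_range] at hj
    have hlb := s_lb hj
    have hub : denum S j ≤ ∑ x ∈ S, x :=
      Finset.single_le_sum (fun x _ => Nat.zero_le x) (denum_mem hj)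
    have hfe : (Finset.Ico d M).filter (fun i => i ≤ denum S j + j) = Finset.Ico d (denum S j + j + 1) := by
      ext x
      simp only [Finset.mem_filter, Finset.mem_Ico]
      omega
    rw [hfe, Nat.card_Ico]
    omega
  have h5 : ∑ j ∈ Finset.range d, (d - (j + 1)) = ∑ j ∈ Finset.range d, j := by
    rw [← Finset.sum_range_reflect]
    refine Finset.sum_congr rfl fun j hj => ?_
    simp only [Finset.mem_range] at hj
    omega
  have h6 : ∑ i ∈ Finset.range d, denum S i = ∑ x ∈ S, x := sum_denum
  rw [h1, h1', h2]
  omega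

lemma scOf_D_aux (r : ℕ) (p : ℕ → Prop) [DecidablePred p]
    (hp : ∀ k : ℕ, (2 * k + 1) % 4 = r ↔ p k) :
    Set.ncard {x | x ∈ Dset (scOf S) ∧ x % 4 = r} = (S.filter p).card := by
  have hds : {x | x ∈ Dset (scOf S) ∧ x % 4 = r} =
      (fun i => 2 * denum S i + 1) '' {i : ℕ | i < S.card ∧ (2 * denum S i + 1) % 4 = r} := by
    ext x
    simp only [Dset, Set.mem_setOf_eq, Set.mem_image]
    constructor
    · rintro ⟨⟨i, hi, rfl⟩, hr⟩
      have hid : i < S.card := (scOf_diag i).mp hi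
      rw [scOf_hook hid] at hr ⊢
      exact ⟨i, ⟨hid, hr⟩, rfl⟩
    · rintro ⟨i, ⟨hid, hr⟩, rfl⟩
      exact ⟨⟨i, (scOf_diag i).mpr hid, (scOf_hook hid).symm⟩, hr⟩
  rw [hds, Set.ncard_image_of_injOn (by
    intro x hx y hy hxy
    simp only [Set.mem_setOf_eq] at hx hy
    dsimp only at hxy
    exact denum_injOn_lt hx.1 hy.1 (by omega))]
  have hset : {i : ℕ | i < S.card ∧ (2 * denum S i + 1) % 4 = r}
      = ↑((Finset.range S.card).filter (fun i => (2 * denum S i + 1) % 4 = r)) := by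
    ext i
    simp only [Set.mem_setOf_eq, Finset.coe_filter, Finset.mem_range]
  rw [hset, Set.ncard_coe_finset]
  conv_rhs => rw [← denum_image S, Finset.filter_image]
  rw [Finset.card_image_of_injOn (by
    intro x hx y hy hxy
    simp only [Finset.coe_filter, Finset.mem_range, Set.mem_setOf_eq] at hx hy
    exact denum_injOn_lt hx.1 hy.1 hxy)]
  congr 1
  apply Finset.filter_congr
  intro i _
  simp only [hp (denum S i)]

lemma scOf_D1 : Set.ncard (D1 (scOf S)) = (S.filter (fun x => x % 2 = 0)).card :=
  scOf_D_aux 1 (fun x => x % 2 = 0) (fun k => by omega)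

lemma scOf_D3 : Set.ncard (D3 (scOf S)) = (S.filter (fun x => x % 2 = 1)).card :=
  scOf_D_aux 3 (fun x => x % 2 = 1) (fun k => by omega)

end scOf

/-! ### From a self-conjugate partition to its arm set -/

noncomputable def armSet (l : ℕ → ℕ) : Finset ℕ :=
  (Finset.range (durfee l)).image (fun i => l i - (i + 1))

section armSet
variable {l : ℕ → ℕ} (hA : Antitone l) {M : ℕ} (hM : l M = 0)

include hA hM

lemma durfee_row (i : ℕ) (hi : i < durfee l) : i + 1 ≤ l i :=
  (durfee_char hA hM i).mp hi

lemma l_d_le : l (durfee l) ≤ durfee l := by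
  have := (durfee_char hA hM (durfee l)).not.mp (by omega)
  omega

lemma arm_strictAnti {i j : ℕ} (hij : i < j) (hj : j < durfee l) :
    l j - (j + 1) < l i - (i + 1) := by
  have h1 := durfee_row hA hM j hj
  have h2 := hA (le_of_lt hij)
  omega

lemma armSet_card : (armSet l).card = durfee l := by
  rw [armSet, Finset.card_image_of_injOn, Finset.card_range]
  intro x hx y hy hxy
  simp only [Finset.coe_range, Set.mem_Iio] at hx hy
  dsimp only at hxy
  rcases Nat.lt_trichotomy x y with h | h | h
  · exact absurd hxy (arm_strictAnti hA hM h hy).ne'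
  · exact h
  · exact absurd hxy (arm_strictAnti hA hM h hx).ne

lemma denum_armSet {i : ℕ} (hi : i < durfee l) :
    denum (armSet l) i = l i - (i + 1) := by
  refine denum_unique (f := fun j => l j - (j + 1)) (armSet_card hA hM) ?_ ?_ hi
  · intro j hj
    rw [armSet]
    exact Finset.mem_image_of_mem _ (Finset.mem_range.mpr hj)
  · intro x y hxy hy
    exact arm_strictAnti hA hM hxy hy

lemma scOf_armSet (hSC : SelfConj l) : scOf (armSet l) = l := by
  funext i
  rcases Nat.lt_or_ge i (durfee l) with hi | hi
  · rw [scOf, if_pos (by rw [armSet_card hA hM]; exact hi)]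
    rw [denum_armSet hA hM hi]
    have := durfee_row hA hM i hi
    omega
  · rw [scOf, if_neg (by rw [armSet_card hA hM]; omega)]
    have hfe : (Finset.range (armSet l).card).filter (fun j => i ≤ denum (armSet l) j + j)
        = Finset.range (conj l i) := by
      ext x
      simp only [Finset.mem_filter, Finset.mem_range, armSet_card hA hM]
      constructor
      · rintro ⟨hx, hle⟩
        rw [denum_armSet hA hM hx] at hle
        have := durfee_row hA hM x hx
        rw [conj_char hA hM]
        omega
      · intro hx
        have hlx : i < l x := (conj_char hA hM x i).mp hx
        have hxd : x < durfee l := by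
          by_contra h
          have h1 := hA (show durfee l ≤ x by omega)
          have h2 := l_d_le hA hM
          omega
        refine ⟨hxd, ?_⟩
        rw [denum_armSet hA hM hxd]
        have := durfee_row hA hM x hxd
        omega
    rw [hfe, Finset.card_range]
    rw [hSC]

end armSet

/-! ### From ordinary partitions to arm finsets (Durfee-rectangle bijection) -/

noncomputable def bOf (c : ℤ) (l : ℕ → ℕ) : ℕ := Set.ncard {i : ℕ | (i : ℤ) + c < (l i : ℤ)}

noncomputable def aOf (c : ℤ) (l : ℕ → ℕ) : ℕ := ((bOf c l : ℤ) + c).toNat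

noncomputable def SOf (c : ℤ) (l : ℕ → ℕ) : Finset ℕ :=
  ((Finset.range (aOf c l)).image fun j => 2 * (conj l j - bOf c l + (aOf c l - 1 - j)))
  ∪ ((Finset.range (bOf c l)).image fun i => 2 * (l i - aOf c l + (bOf c l - 1 - i)) + 1)

section PartSide
variable {c : ℤ} {l : ℕ → ℕ} (hA : Antitone l) {M : ℕ} (hM : l M = 0)

include hA hM

lemma bOf_char (i : ℕ) : i < bOf c l ↔ (i : ℤ) + c < (l i : ℤ) := by
  have hfin : {i : ℕ | (i : ℤ) + c < (l i : ℤ)}.Finite := by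
    apply (Set.finite_Iio (M + c.natAbs)).subset
    intro i hi
    simp only [Set.mem_setOf_eq] at hi
    simp only [Set.mem_Iio]
    by_contra h
    have h2 : l i = 0 := Nat.le_zero.mp (hM ▸ hA (show M ≤ i by omega))
    rw [h2] at hi
    push_cast at hi
    have h6 : -(c.natAbs : ℤ) ≤ c := by
      rw [← Int.abs_eq_natAbs]
      exact neg_abs_le c
    have h7 : (M : ℤ) + (c.natAbs : ℤ) ≤ (i : ℤ) := by exact_mod_cast not_lt.mp h
    omega
  have hdc : ∀ ⦃x y : ℕ⦄, x ≤ y → y ∈ {i : ℕ | (i : ℤ) + c < (l i : ℤ)}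
      → x ∈ {i : ℕ | (i : ℤ) + c < (l i : ℤ)} := by
    intro x y hxy hy
    simp only [Set.mem_setOf_eq] at hy ⊢
    have h1 := hA hxy
    have h2 : (l y : ℤ) ≤ (l x : ℤ) := by exact_mod_cast h1
    have h3 : (x : ℤ) ≤ y := by exact_mod_cast hxy
    omega
  exact (finseg hfin hdc i).symm

lemma aOf_spec : (aOf c l : ℤ) = (bOf c l : ℤ) + c := by
  rw [aOf, Int.toNat_of_nonneg]
  by_contra h
  push_neg at h
  have hc : c < 0 := by omega
  have : bOf c l < bOf c l := by
    rw [bOf_char hA hM]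
    have : (bOf c l : ℤ) + c < 0 := by omega
    have h0 : (0 : ℤ) ≤ (l (bOf c l) : ℤ) := by positivity
    omega
  omega

lemma row_ge_a {i : ℕ} (hi : i < bOf c l) : aOf c l ≤ l i := by
  have h1 : (bOf c l) - 1 < bOf c l := by omega
  have h2 := (bOf_char hA hM (bOf c l - 1)).mp h1
  have h3 : l (bOf c l - 1) ≤ l i := hA (by omega)
  have h4 := aOf_spec (c := c) hA hM
  have h5 : ((bOf c l - 1 : ℕ) : ℤ) = (bOf c l : ℤ) - 1 := by omega
  rw [h5] at h2
  have : (aOf c l : ℤ) ≤ (l i : ℤ) := by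
    have : (l (bOf c l - 1) : ℤ) ≤ (l i : ℤ) := by exact_mod_cast h3
    omega
  exact_mod_cast this

lemma row_le_a {i : ℕ} (hi : bOf c l ≤ i) : l i ≤ aOf c l := by
  have h2 : ¬ ((bOf c l : ℤ) + c < (l (bOf c l) : ℤ)) := by
    rw [← bOf_char hA hM]; omega
  have h3 : l i ≤ l (bOf c l) := hA hi
  have h4 := aOf_spec (c := c) hA hM
  have : (l i : ℤ) ≤ (aOf c l : ℤ) := by
    have : (l i : ℤ) ≤ (l (bOf c l) : ℤ) := by exact_mod_cast h3
    omega
  exact_mod_cast this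

lemma conj_ge_b {j : ℕ} (hj : j < aOf c l) : bOf c l ≤ conj l j := by
  rcases Nat.eq_zero_or_pos (bOf c l) with h | h
  · omega
  · have : bOf c l - 1 < conj l j := by
      rw [conj_char hA hM]
      have := row_ge_a hA hM (show bOf c l - 1 < bOf c l by omega)
      omega
    omega

lemma conj_le_M (j : ℕ) : conj l j ≤ M := by
  by_contra h
  have : j < l M := (conj_char hA hM M j).mp (by omega)
  omega

end PartSide

lemma sq_sub (k : ℕ) : (k * k - k) + k = k * k := by
  rcases k with _ | t
  · simp
  · have : t + 1 ≤ (t + 1) * (t + 1) := Nat.le_mul_of_pos_left _ (by omega)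
    omega

lemma reflect_sum (k : ℕ) : ∑ j ∈ Finset.range k, (k - 1 - j) = ∑ j ∈ Finset.range k, j := by
  simpa using Finset.sum_range_reflect (fun j => j) k

section PartSide2
variable {c : ℤ} {l : ℕ → ℕ} (hA : Antitone l) {M : ℕ} (hM : l M = 0)

include hA hM

lemma psize_rect : psize l = aOf c l * bOf c l
    + (∑ i ∈ Finset.range (bOf c l), (l i - aOf c l))
    + (∑ j ∈ Finset.range (aOf c l), (conj l j - bOf c l)) := by
  set a := aOf c l
  set b := bOf c l
  have hMb : l (M + b) = 0 := Nat.le_zero.mp (hM ▸ hA (show M ≤ M + b by omega))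
  rw [psize_eq_sum hA hMb]
  conv_lhs => rw [Finset.range_eq_Ico,
    ← Finset.sum_Ico_consecutive _ (show 0 ≤ b by omega) (show b ≤ M + b by omega)]
  have h1 : ∑ i ∈ Finset.Ico 0 b, l i = a * b + ∑ i ∈ Finset.range b, (l i - a) := by
    rw [← Finset.range_eq_Ico]
    have hterm : ∀ i ∈ Finset.range b, l i = (l i - a) + a := by
      intro i hi
      simp only [Finset.mem_range] at hi
      have := row_ge_a hA hM hi
      omega
    rw [Finset.sum_congr rfl hterm, Finset.sum_add_distrib, Finset.sum_const,
      Finset.card_range, smul_eq_mul]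
    ring
  have h2 : ∑ i ∈ Finset.Ico b (M + b), l i = ∑ j ∈ Finset.range a, (conj l j - b) := by
    have h2a : ∑ i ∈ Finset.Ico b (M + b), l i
        = ∑ i ∈ Finset.Ico b (M + b), ((Finset.range a).filter (fun j => j < l i)).card := by
      refine Finset.sum_congr rfl fun i hi => ?_
      simp only [Finset.mem_Ico] at hi
      have hle := row_le_a hA hM hi.1
      have : (Finset.range a).filter (fun j => j < l i) = Finset.range (l i) := by
        ext x
        simp only [Finset.mem_filter, Finset.mem_range]
        omega
      rw [this, Finset.card_range]
    rw [h2a, swap_count]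
    refine Finset.sum_congr rfl fun j hj => ?_
    simp only [Finset.mem_range] at hj
    have hcb := conj_ge_b hA hM hj
    have hcM := conj_le_M hA hM j
    have : (Finset.Ico b (M + b)).filter (fun i => j < l i) = Finset.Ico b (conj l j) := by
      ext x
      simp only [Finset.mem_filter, Finset.mem_Ico]
      rw [← conj_char hA hM]
      omega
    rw [this, Nat.card_Ico]
  rw [h1, h2]

lemma qf_strictAnti {j j' : ℕ} (h : j < j') (hj' : j' < aOf c l) :
    2 * (conj l j' - bOf c l + (aOf c l - 1 - j')) < 2 * (conj l j - bOf c l + (aOf c l - 1 - j)) := by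
  have h1 : conj l j' ≤ conj l j := conj_anti hA hM (le_of_lt h)
  have h2 := conj_ge_b hA hM hj'
  have h3 := conj_ge_b hA hM (show j < aOf c l by omega)
  omega

lemma pf_strictAnti {i i' : ℕ} (h : i < i') (hi' : i' < bOf c l) :
    2 * (l i' - aOf c l + (bOf c l - 1 - i')) + 1 < 2 * (l i - aOf c l + (bOf c l - 1 - i)) + 1 := by
  have h1 : l i' ≤ l i := hA (le_of_lt h)
  have h2 := row_ge_a hA hM hi'
  have h3 := row_ge_a hA hM (show i < bOf c l by omega)
  omega

lemma SOf_filter_even :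
    (SOf c l).filter (fun x => x % 2 = 0)
      = (Finset.range (aOf c l)).image (fun j => 2 * (conj l j - bOf c l + (aOf c l - 1 - j))) := by
  rw [SOf, Finset.filter_union]
  have hQ : ((Finset.range (aOf c l)).image fun j => 2 * (conj l j - bOf c l + (aOf c l - 1 - j))).filter (fun x => x % 2 = 0)
      = (Finset.range (aOf c l)).image fun j => 2 * (conj l j - bOf c l + (aOf c l - 1 - j)) := by
    apply Finset.filter_true_of_mem
    intro x hx
    simp only [Finset.mem_image] at hx
    obtain ⟨j, _, rfl⟩ := hx
    omega
  have hP : ((Finset.range (bOf c l)).image fun i => 2 * (l i - aOf c l + (bOf c l - 1 - i)) + 1).filter (fun x => x % 2 = 0) = ∅ := by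
    rw [Finset.filter_eq_empty_iff]
    intro x hx
    simp only [Finset.mem_image] at hx
    obtain ⟨i, _, rfl⟩ := hx
    omega
  rw [hQ, hP, Finset.union_empty]

lemma SOf_filter_odd :
    (SOf c l).filter (fun x => x % 2 = 1)
      = (Finset.range (bOf c l)).image (fun i => 2 * (l i - aOf c l + (bOf c l - 1 - i)) + 1) := by
  rw [SOf, Finset.filter_union]
  have hQ : ((Finset.range (aOf c l)).image fun j => 2 * (conj l j - bOf c l + (aOf c l - 1 - j))).filter (fun x => x % 2 = 1) = ∅ := by
    rw [Finset.filter_eq_empty_iff]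
    intro x hx
    simp only [Finset.mem_image] at hx
    obtain ⟨j, _, rfl⟩ := hx
    omega
  have hP : ((Finset.range (bOf c l)).image fun i => 2 * (l i - aOf c l + (bOf c l - 1 - i)) + 1).filter (fun x => x % 2 = 1)
      = (Finset.range (bOf c l)).image fun i => 2 * (l i - aOf c l + (bOf c l - 1 - i)) + 1 := by
    apply Finset.filter_true_of_mem
    intro x hx
    simp only [Finset.mem_image] at hx
    obtain ⟨i, _, rfl⟩ := hx
    omega
  rw [hQ, hP, Finset.empty_union]

lemma SOf_even_card :
    ((SOf c l).filter (fun x => x % 2 = 0)).card = aOf c l := by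
  rw [SOf_filter_even hA hM, Finset.card_image_of_injOn, Finset.card_range]
  intro x hx y hy hxy
  simp only [Finset.coe_range, Set.mem_Iio] at hx hy
  dsimp only at hxy
  rcases Nat.lt_trichotomy x y with h | h | h
  · exact absurd hxy (qf_strictAnti hA hM h hy).ne'
  · exact h
  · exact absurd hxy (qf_strictAnti hA hM h hx).ne

lemma SOf_odd_card :
    ((SOf c l).filter (fun x => x % 2 = 1)).card = bOf c l := by
  rw [SOf_filter_odd hA hM, Finset.card_image_of_injOn, Finset.card_range]
  intro x hx y hy hxy
  simp only [Finset.coe_range, Set.mem_Iio] at hx hy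
  dsimp only at hxy
  rcases Nat.lt_trichotomy x y with h | h | h
  · exact absurd hxy (pf_strictAnti hA hM h hy).ne'
  · exact h
  · exact absurd hxy (pf_strictAnti hA hM h hx).ne

lemma SOf_card : (SOf c l).card = aOf c l + bOf c l := by
  have : SOf c l = (SOf c l).filter (fun x => x % 2 = 0) ∪ (SOf c l).filter (fun x => x % 2 = 1) := by
    ext x
    simp only [Finset.mem_union, Finset.mem_filter]
    have : x % 2 = 0 ∨ x % 2 = 1 := by omega
    tauto
  rw [this, Finset.card_union_of_disjoint, SOf_even_card hA hM, SOf_odd_card hA hM]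
  rw [Finset.disjoint_filter]
  intro x _ h
  have h2 : x % 2 = 0 := h
  show ¬ x % 2 = 1
  omega

lemma SOf_split : SOf c l = (SOf c l).filter (fun x => x % 2 = 0) ∪ (SOf c l).filter (fun x => x % 2 = 1) := by
  ext x
  simp only [Finset.mem_union, Finset.mem_filter]
  have : x % 2 = 0 ∨ x % 2 = 1 := by omega
  tauto

lemma SOf_sum_key {tm n' : ℕ} (htm : ((tm : ℕ) : ℤ) = 2 * c ^ 2 - c) (hn : psize l = n') :
    2 * (∑ x ∈ SOf c l, x) + (SOf c l).card = 4 * n' + tm := by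
  set a := aOf c l with hadef
  set b := bOf c l with hbdef
  set Sν := ∑ j ∈ Finset.range a, (conj l j - b) with hSν
  set Sμ := ∑ i ∈ Finset.range b, (l i - a) with hSμ
  have hq : ∑ x ∈ (SOf c l).filter (fun x => x % 2 = 0), x = 2 * Sν + (a * a - a) := by
    rw [SOf_filter_even hA hM, Finset.sum_image (by
      intro x hx y hy hxy
      simp only [Finset.coe_range, Set.mem_Iio, Finset.mem_coe, Finset.mem_range] at hx hy
      rcases Nat.lt_trichotomy x y with h | h | h
      · exact absurd hxy (qf_strictAnti hA hM h hy).ne'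
      · exact h
      · exact absurd hxy (qf_strictAnti hA hM h hx).ne)]
    have : ∀ j ∈ Finset.range a, 2 * (conj l j - b + (a - 1 - j))
        = 2 * (conj l j - b) + 2 * (a - 1 - j) := fun j _ => by ring
    rw [Finset.sum_congr rfl this, Finset.sum_add_distrib, ← Finset.mul_sum, ← Finset.mul_sum]
    rw [reflect_sum]
    have h2 : (∑ j ∈ Finset.range a, j) * 2 = a * (a - 1) := Finset.sum_range_id_mul_two a
    have h3 : a * (a - 1) = a * a - a := by
      rcases ha : a with _ | t
      · simp
      · have hexp : (t + 1) * (t + 1) = (t + 1) * t + (t + 1) := by ring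
        simp only [Nat.succ_sub_one]
        omega
    omega
  have hp : ∑ x ∈ (SOf c l).filter (fun x => x % 2 = 1), x = 2 * Sμ + (b * b - b) + b := by
    rw [SOf_filter_odd hA hM, Finset.sum_image (by
      intro x hx y hy hxy
      simp only [Finset.coe_range, Set.mem_Iio, Finset.mem_coe, Finset.mem_range] at hx hy
      rcases Nat.lt_trichotomy x y with h | h | h
      · exact absurd hxy (pf_strictAnti hA hM h hy).ne'
      · exact h
      · exact absurd hxy (pf_strictAnti hA hM h hx).ne)]
    have : ∀ i ∈ Finset.range b, 2 * (l i - a + (b - 1 - i)) + 1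
        = (2 * (l i - a) + 2 * (b - 1 - i)) + 1 := fun i _ => by ring
    rw [Finset.sum_congr rfl this, Finset.sum_add_distrib, Finset.sum_add_distrib,
      ← Finset.mul_sum, ← Finset.mul_sum, reflect_sum]
    have h2 : (∑ j ∈ Finset.range b, j) * 2 = b * (b - 1) := Finset.sum_range_id_mul_two b
    have h3 : b * (b - 1) = b * b - b := by
      rcases hb : b with _ | t
      · simp
      · have hexp : (t + 1) * (t + 1) = (t + 1) * t + (t + 1) := by ring
        simp only [Nat.succ_sub_one]
        omega
    have h4 : ∑ _x ∈ Finset.range b, 1 = b := by simp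
    omega
  have hsum : ∑ x ∈ SOf c l, x = (2 * Sν + (a * a - a)) + (2 * Sμ + (b * b - b) + b) := by
    conv_lhs => rw [SOf_split hA hM]
    rw [Finset.sum_union (by
      rw [Finset.disjoint_filter]
      intro x _ h
      have h2 : x % 2 = 0 := h
      show ¬ x % 2 = 1
      omega)]
    rw [hq, hp]
  have hrect := psize_rect (c := c) hA hM
  rw [hn, ← hadef, ← hbdef] at hrect
  have hcard := SOf_card (c := c) hA hM
  rw [← hadef, ← hbdef] at hcard
  have ha' : (a : ℤ) - b - c = 0 := by
    have := aOf_spec (c := c) hA hM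
    rw [← hadef, ← hbdef] at this
    omega
  have hA2 := sq_sub a
  have hB2 := sq_sub b
  -- cast everything to ℤ
  have hZ : ((2 * (∑ x ∈ SOf c l, x) + (SOf c l).card : ℕ) : ℤ) = 4 * (n' : ℤ) + (tm : ℤ) := by
    rw [hsum, hcard, htm]
    have hrectZ : (n' : ℤ) = (a : ℤ) * b + Sμ + Sν := by exact_mod_cast hrect
    have hA2Z : ((a * a - a : ℕ) : ℤ) = (a : ℤ) * a - a := by
      have : ((a * a - a : ℕ) : ℤ) + a = (a : ℤ) * a := by exact_mod_cast hA2
      omega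
    have hB2Z : ((b * b - b : ℕ) : ℤ) = (b : ℤ) * b - b := by
      have : ((b * b - b : ℕ) : ℤ) + b = (b : ℤ) * b := by exact_mod_cast hB2
      omega
    push_cast
    rw [hA2Z, hB2Z, hrectZ]
    push_cast
    linear_combination (2 * (a : ℤ) - 2 * b + 2 * c - 1) * ha'
  exact_mod_cast hZ

end PartSide2

/-! ### From arm finsets back to ordinary partitions -/

lemma denum_gap2 {T : Finset ℕ} {r : ℕ} (hpar : ∀ x ∈ T, x % 2 = r) {i j : ℕ}
    (hij : i ≤ j) (hj : j < T.card) : denum T j + 2 * (j - i) ≤ denum T i := by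
  induction j, hij using Nat.le_induction with
  | base => simp
  | succ j hij ih =>
    have h1 := denum_strictAnti (show j < j + 1 by omega) hj
    have hp1 := hpar _ (denum_mem hj)
    have hp2 := hpar _ (denum_mem (show j < T.card by omega))
    have h2 := ih (by omega)
    omega

noncomputable def nud (T : Finset ℕ) (j : ℕ) : ℕ := denum T j / 2 - (T.card - 1 - j)

lemma nud_ge {T : Finset ℕ} {r : ℕ} (hpar : ∀ x ∈ T, x % 2 = r) {j : ℕ} (hj : j < T.card) :
    2 * (T.card - 1 - j) ≤ denum T j := by
  have := denum_gap2 hpar (show j ≤ T.card - 1 by omega) (show T.card - 1 < T.card by omega)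
  omega

lemma nud_spec {T : Finset ℕ} {r : ℕ} (hpar : ∀ x ∈ T, x % 2 = r) {j : ℕ} (hj : j < T.card) :
    nud T j + (T.card - 1 - j) = denum T j / 2 := by
  have := nud_ge hpar hj
  rw [nud]
  omega

lemma nud_anti {T : Finset ℕ} {r : ℕ} (hpar : ∀ x ∈ T, x % 2 = r) {i j : ℕ}
    (hij : i ≤ j) (hj : j < T.card) : nud T j ≤ nud T i := by
  have h1 := denum_gap2 hpar hij hj
  rw [nud, nud]
  omega

noncomputable def lam2 (P Q : Finset ℕ) : ℕ → ℕ :=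
  fun i => if i < P.card then nud P i + Q.card
    else ((Finset.range Q.card).filter (fun j => i - P.card < nud Q j)).card

noncomputable def lamOf (S : Finset ℕ) : ℕ → ℕ :=
  lam2 (S.filter (fun x => x % 2 = 1)) (S.filter (fun x => x % 2 = 0))

section LamSide
variable {P Q : Finset ℕ} (hP : ∀ x ∈ P, x % 2 = 1) (hQ : ∀ x ∈ Q, x % 2 = 0)

lemma lam2_tail_le (i : ℕ) :
    ((Finset.range Q.card).filter (fun j => i - P.card < nud Q j)).card ≤ Q.card :=
  le_trans (Finset.card_filter_le _ _) (by simp)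

include hP hQ

lemma lam2_anti : Antitone (lam2 P Q) := by
  intro i i' hii'
  rcases Nat.lt_or_ge i' P.card with h | h
  · rw [lam2, lam2, if_pos h, if_pos (by omega)]
    have := nud_anti hP hii' h
    omega
  · rcases Nat.lt_or_ge i P.card with h2 | h2
    · rw [lam2, lam2, if_pos h2, if_neg (by omega)]
      have := lam2_tail_le (P := P) (Q := Q) i'
      omega
    · rw [lam2, lam2, if_neg (by omega), if_neg (by omega)]
      apply Finset.card_le_card
      intro x hx
      simp only [Finset.mem_filter, Finset.mem_range] at hx ⊢
      exact ⟨hx.1, by omega⟩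

lemma lam2_zero : lam2 P Q (P.card + denum Q 0 + 1) = 0 := by
  rw [lam2, if_neg (by omega)]
  convert Finset.card_empty
  rw [Finset.filter_eq_empty_iff]
  intro j hj
  simp only [Finset.mem_range] at hj
  have h1 : denum Q j ≤ denum Q 0 := by
    rcases Nat.eq_zero_or_pos j with h | h
    · rw [h]
    · exact le_of_lt (denum_strictAnti h hj)
  have h2 : nud Q j ≤ denum Q j / 2 := by rw [nud]; omega
  omega

lemma lam2_isPartition : IsPartition (lam2 P Q) :=
  ⟨lam2_anti hP hQ, ⟨_, lam2_zero hP hQ⟩⟩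

lemma lam2_conj {j : ℕ} (hj : j < Q.card) :
    conj (lam2 P Q) j = P.card + nud Q j := by
  rw [conj]
  have hset : {i | j < lam2 P Q i} = Set.Iio (P.card + nud Q j) := by
    ext i
    simp only [Set.mem_setOf_eq, Set.mem_Iio]
    rcases Nat.lt_or_ge i P.card with h | h
    · rw [lam2, if_pos h]
      constructor
      · intro _; omega
      · intro _; omega
    · rw [lam2, if_neg (by omega)]
      rw [← finsegF (d := Q.card) (p := fun j' => i - P.card < nud Q j') (by
        intro x y hxy hy hpy
        exact lt_of_lt_of_le hpy (nud_anti hQ hxy hy))]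
      simp only [Finset.mem_filter, Finset.mem_range]
      constructor
      · intro hh; omega
      · intro hh; exact ⟨hj, by omega⟩
  rw [hset, ncard_Iio]

lemma lam2_bOf {c : ℤ} (hc : (Q.card : ℤ) - (P.card : ℤ) = c) : bOf c (lam2 P Q) = P.card := by
  rw [bOf]
  have hset : {i : ℕ | (i : ℤ) + c < (lam2 P Q i : ℤ)} = Set.Iio P.card := by
    ext i
    simp only [Set.mem_setOf_eq, Set.mem_Iio]
    rcases Nat.lt_or_ge i P.card with h | h
    · rw [lam2, if_pos h]
      constructor
      · intro _; exact h
      · intro _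
        have : (0 : ℤ) ≤ nud P i := by positivity
        push_cast
        omega
    · rw [lam2, if_neg (by omega)]
      have h2 := lam2_tail_le (P := P) (Q := Q) i
      constructor
      · intro hh
        exfalso
        have h3 : ((Finset.range Q.card).filter (fun j => i - P.card < nud Q j)).card ≤ Q.card := h2
        have h4 : (((Finset.range Q.card).filter (fun j => i - P.card < nud Q j)).card : ℤ) ≤ (Q.card : ℤ) := by exact_mod_cast h3
        have h5 : (P.card : ℤ) ≤ (i : ℤ) := by exact_mod_cast h
        omega
      · intro hh; omega
  rw [hset, ncard_Iio]

lemma lam2_aOf {c : ℤ} (hc : (Q.card : ℤ) - (P.card : ℤ) = c) : aOf c (lam2 P Q) = Q.card := by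
  rw [aOf, lam2_bOf hP hQ hc]
  omega

end LamSide

section RT1
variable {P Q : Finset ℕ} (hP : ∀ x ∈ P, x % 2 = 1) (hQ : ∀ x ∈ Q, x % 2 = 0)
  {c : ℤ} (hc : (Q.card : ℤ) - (P.card : ℤ) = c)

include hP hQ hc

lemma SOf_lam2 : SOf c (lam2 P Q) = Q ∪ P := by
  rw [SOf, lam2_aOf hP hQ hc, lam2_bOf hP hQ hc]
  have hQimg : (Finset.range Q.card).image
      (fun j => 2 * (conj (lam2 P Q) j - P.card + (Q.card - 1 - j))) = Q := by
    rw [Finset.image_congr (g := denum Q) (by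
      intro j hj
      simp only [Finset.mem_coe, Finset.mem_range] at hj
      dsimp only
      rw [lam2_conj hP hQ hj]
      have h1 := nud_spec hQ hj
      have h2 := hQ _ (denum_mem hj)
      omega)]
    exact denum_image Q
  have hPimg : (Finset.range P.card).image
      (fun i => 2 * (lam2 P Q i - Q.card + (P.card - 1 - i)) + 1) = P := by
    rw [Finset.image_congr (g := denum P) (by
      intro i hi
      simp only [Finset.mem_coe, Finset.mem_range] at hi
      dsimp only
      rw [lam2, if_pos hi]
      have h1 := nud_spec hP hi
      have h2 := hP _ (denum_mem hi)
      omega)]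
    exact denum_image P
  rw [hQimg, hPimg]

end RT1

lemma SOf_lamOf {S : Finset ℕ} {c : ℤ}
    (hc : ((S.filter (fun x => x % 2 = 0)).card : ℤ) - ((S.filter (fun x => x % 2 = 1)).card : ℤ) = c) :
    SOf c (lamOf S) = S := by
  rw [lamOf, SOf_lam2 (fun x hx => (Finset.mem_filter.mp hx).2) (fun x hx => (Finset.mem_filter.mp hx).2) hc]
  ext x
  simp only [Finset.mem_union, Finset.mem_filter]
  have : x % 2 = 0 ∨ x % 2 = 1 := by omega
  tauto

section RT2
variable {c : ℤ} {l : ℕ → ℕ} (hA : Antitone l) {M : ℕ} (hM : l M = 0)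

include hA hM

lemma lamOf_SOf : lamOf (SOf c l) = l := by
  set a := aOf c l with hadef
  set b := bOf c l with hbdef
  set P' := (SOf c l).filter (fun x => x % 2 = 1) with hP'
  set Q' := (SOf c l).filter (fun x => x % 2 = 0) with hQ'
  have hPcard : P'.card = b := SOf_odd_card hA hM
  have hQcard : Q'.card = a := SOf_even_card hA hM
  have hdP : ∀ i < b, denum P' i = 2 * (l i - a + (b - 1 - i)) + 1 := by
    intro i hi
    refine denum_unique (f := fun i => 2 * (l i - a + (b - 1 - i)) + 1) hPcard ?_ ?_ hi
    · intro j hj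
      rw [hP', SOf_filter_odd hA hM, ← hadef, ← hbdef]
      exact Finset.mem_image_of_mem _ (Finset.mem_range.mpr hj)
    · intro x y hxy hy
      exact pf_strictAnti hA hM hxy hy
  have hdQ : ∀ j < a, denum Q' j = 2 * (conj l j - b + (a - 1 - j)) := by
    intro j hj
    refine denum_unique (f := fun j => 2 * (conj l j - b + (a - 1 - j))) hQcard ?_ ?_ hj
    · intro j' hj'
      rw [hQ', SOf_filter_even hA hM, ← hadef, ← hbdef]
      exact Finset.mem_image_of_mem _ (Finset.mem_range.mpr hj')
    · intro x y hxy hy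
      exact qf_strictAnti hA hM hxy hy
  have hnP : ∀ i < b, nud P' i = l i - a := by
    intro i hi
    rw [nud, hdP i hi, hPcard]
    omega
  have hnQ : ∀ j < a, nud Q' j = conj l j - b := by
    intro j hj
    rw [nud, hdQ j hj, hQcard]
    omega
  funext i
  rw [lamOf, ← hP', ← hQ']
  rcases Nat.lt_or_ge i b with hi | hi
  · rw [lam2, if_pos (by rw [hPcard]; exact hi), hnP i hi, hQcard]
    have := row_ge_a hA hM hi
    omega
  · rw [lam2, if_neg (by rw [hPcard]; omega), hPcard, hQcard]
    have hfc : (Finset.range a).filter (fun j => i - b < nud Q' j)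
        = (Finset.range a).filter (fun j => j < l i) := by
      apply Finset.filter_congr
      intro j hj
      simp only [Finset.mem_range] at hj
      rw [hnQ j hj]
      have h1 := conj_ge_b hA hM hj
      have h2 : j < l i ↔ i < conj l j := (conj_char hA hM i j).symm
      rw [h2]
      omega
    rw [hfc]
    have hla := row_le_a hA hM hi
    have : (Finset.range a).filter (fun j => j < l i) = Finset.range (l i) := by
      ext x
      simp only [Finset.mem_filter, Finset.mem_range]
      omega
    rw [this, Finset.card_range]

end RT2

lemma htm_eq (m : ℕ) : ((m * (m + 1) / 2 : ℕ) : ℤ)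
    = 2 * ((-1 : ℤ) ^ (m + 1) * (((m + 1) / 2 : ℕ) : ℤ)) ^ 2
      - (-1 : ℤ) ^ (m + 1) * (((m + 1) / 2 : ℕ) : ℤ) := by
  rcases Nat.even_or_odd m with ⟨k, hk⟩ | ⟨k, hk⟩
  · subst hk
    have h1 : (-1 : ℤ) ^ (k + k + 1) = -1 := Odd.neg_one_pow ⟨k, by ring⟩
    have h2 : ((k + k + 1) / 2 : ℕ) = k := by omega
    have h3 : (k + k) * (k + k + 1) / 2 = k * (2 * k + 1) := by
      have : (k + k) * (k + k + 1) = 2 * (k * (2 * k + 1)) := by ring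
      rw [this, Nat.mul_div_cancel_left _ (by omega)]
    rw [h1, h2, h3]
    push_cast
    ring
  · subst hk
    have h1 : (-1 : ℤ) ^ (2 * k + 1 + 1) = 1 := Even.neg_one_pow ⟨k + 1, by ring⟩
    have h2 : ((2 * k + 1 + 1) / 2 : ℕ) = k + 1 := by omega
    have h3 : (2 * k + 1) * (2 * k + 1 + 1) / 2 = (2 * k + 1) * (k + 1) := by
      have : (2 * k + 1) * (2 * k + 1 + 1) = 2 * ((2 * k + 1) * (k + 1)) := by ring
      rw [this, Nat.mul_div_cancel_left _ (by omega)]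
    rw [h1, h2, h3]
    push_cast
    ring

theorem bijection_SCm_partitions (m n : ℕ) :
    Nonempty
      ({l : ℕ → ℕ // IsPartition l ∧ SelfConj l ∧ psize l = 4 * n + m * (m + 1) / 2 ∧
          (Set.ncard (D1 l) : ℤ) - (Set.ncard (D3 l) : ℤ) =
            (-1 : ℤ) ^ (m + 1) * (((m + 1) / 2 : ℕ) : ℤ)} ≃
        {l : ℕ → ℕ // IsPartition l ∧ psize l = n}) := by
  set c : ℤ := (-1 : ℤ) ^ (m + 1) * (((m + 1) / 2 : ℕ) : ℤ) with hcdef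
  have htm : ((m * (m + 1) / 2 : ℕ) : ℤ) = 2 * c ^ 2 - c := htm_eq m
  have eAB : {l : ℕ → ℕ // IsPartition l ∧ SelfConj l ∧ psize l = 4 * n + m * (m + 1) / 2 ∧
        (Set.ncard (D1 l) : ℤ) - (Set.ncard (D3 l) : ℤ) = c}
      ≃ {S : Finset ℕ // 2 * (∑ x ∈ S, x) + S.card = 4 * n + m * (m + 1) / 2 ∧
        ((S.filter (fun x => x % 2 = 0)).card : ℤ) - ((S.filter (fun x => x % 2 = 1)).card : ℤ) = c} := by
    refine Equiv.mk (fun x => ⟨armSet x.1, ?_, ?_⟩) (fun y => ⟨scOf y.1, scOf_isPartition, scOf_selfConj, ?_, ?_⟩) ?_ ?_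
    · obtain ⟨⟨hA, M, hM⟩, hSC, hps, hD⟩ := x.2
      have hl := scOf_armSet hA hM hSC
      rw [← scOf_psize (S := armSet x.1), hl]
      exact hps
    · obtain ⟨⟨hA, M, hM⟩, hSC, hps, hD⟩ := x.2
      have hl := scOf_armSet hA hM hSC
      rw [← scOf_D1 (S := armSet x.1), ← scOf_D3 (S := armSet x.1), hl]
      exact hD
    · rw [scOf_psize]
      exact y.2.1
    · rw [scOf_D1, scOf_D3]
      exact y.2.2
    · intro x
      apply Subtype.ext
      obtain ⟨⟨hA, M, hM⟩, hSC, hps, hD⟩ := x.2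
      exact scOf_armSet hA hM hSC
    · intro y
      apply Subtype.ext
      show armSet (scOf y.1) = y.1
      rw [armSet, scOf_durfee]
      rw [Finset.image_congr (g := denum y.1) (by
        intro i hi
        simp only [Finset.mem_coe, Finset.mem_range] at hi
        dsimp only
        rw [scOf, if_pos hi]
        omega)]
      exact denum_image y.1
  have eCB : {l : ℕ → ℕ // IsPartition l ∧ psize l = n}
      ≃ {S : Finset ℕ // 2 * (∑ x ∈ S, x) + S.card = 4 * n + m * (m + 1) / 2 ∧
        ((S.filter (fun x => x % 2 = 0)).card : ℤ) - ((S.filter (fun x => x % 2 = 1)).card : ℤ) = c} := by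
    refine Equiv.mk (fun x => ⟨SOf c x.1, ?_, ?_⟩) (fun y => ⟨lamOf y.1, ?_, ?_⟩) ?_ ?_
    · obtain ⟨⟨hA, M, hM⟩, hps⟩ := x.2
      exact SOf_sum_key hA hM htm hps
    · obtain ⟨⟨hA, M, hM⟩, hps⟩ := x.2
      rw [SOf_even_card hA hM, SOf_odd_card hA hM]
      have := aOf_spec (c := c) hA hM
      omega
    · exact lam2_isPartition (fun x hx => (Finset.mem_filter.mp hx).2)
        (fun x hx => (Finset.mem_filter.mp hx).2)
    · have hAP : Antitone (lamOf y.1) := lam2_anti (fun x hx => (Finset.mem_filter.mp hx).2)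
        (fun x hx => (Finset.mem_filter.mp hx).2)
      have hM0 := lam2_zero (P := y.1.filter (fun x => x % 2 = 1)) (Q := y.1.filter (fun x => x % 2 = 0))
        (fun x hx => (Finset.mem_filter.mp hx).2) (fun x hx => (Finset.mem_filter.mp hx).2)
      have hrt := SOf_lamOf (c := c) y.2.2
      have hkey := SOf_sum_key (l := lamOf y.1) hAP hM0 htm rfl
      rw [hrt] at hkey
      have hy := y.2.1
      omega
    · intro x
      apply Subtype.ext
      obtain ⟨⟨hA, M, hM⟩, hps⟩ := x.2
      exact lamOf_SOf hA hM
    · intro y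
      apply Subtype.ext
      exact SOf_lamOf y.2.2
  exact ⟨eAB.trans eCB.symm⟩
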